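/- For fixed H ∈ ℝ and fixed ρ ∈ ℝ, the function m ↦ J_{H,ρ,m}(t) is pointwise monotone nondecreasing in m ∈ (0,∞]: if 0 < m₁ ≤ m₂ ≤ ∞ then J_{H,ρ,m₁}(t) ≤ J_{H,ρ,m₂}(t) for all t ∈ ℝ, where J_{H,ρ,∞}(t) := exp(Ht − (ρ/2)t²). -/

import Mathlib

open scoped Classical
noncomputable def sdel (δ t : ℝ) : ℝ :=
  if 0 < δ then Real.sin (Real.sqrt δ * t) / Real.sqrt δ
  else if δ = 0 then t
  else Real.sinh (Real.sqrt (-δ) * t) / Real.sqrt (-δ)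

noncomputable def cdel (δ t : ℝ) : ℝ :=
  if 0 < δ then Real.cos (Real.sqrt δ * t)
  else if δ = 0 then 1
  else Real.cosh (Real.sqrt (-δ) * t)


/-- Truncation `f₊` of `f` between its first nonpositive and first positive roots. -/
noncomputable def truncPos (f : ℝ → ℝ) (t : ℝ) : ℝ :=
  if ∃ s ∈ Set.Ioo (min t 0) (max t 0), f s = 0 then 0 else f t

/-- The model Jacobian `J_{H,ρ,m}` for `m ∈ (0,∞)`. -/
noncomputable def Jfun (H ρ m : ℝ) (t : ℝ) : ℝ :=
  (truncPos (fun s => cdel (ρ / m) s + (H / m) * sdel (ρ / m) s) t) ^ m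

lemma sdel_zero (δ : ℝ) : sdel δ 0 = 0 := by
  unfold sdel; split_ifs <;> simp

lemma cdel_zero (δ : ℝ) : cdel δ 0 = 1 := by
  unfold cdel; split_ifs <;> simp

lemma sdel_neg (δ t : ℝ) : sdel δ (-t) = -sdel δ t := by
  unfold sdel; split_ifs <;> simp [mul_neg, neg_div]

lemma cdel_neg (δ t : ℝ) : cdel δ (-t) = cdel δ t := by
  unfold cdel; split_ifs <;> simp [mul_neg]

lemma hasDerivAt_sdel (δ t : ℝ) : HasDerivAt (sdel δ) (cdel δ t) t := by
  unfold sdel cdel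
  rcases lt_trichotomy 0 δ with h | h | h
  · simp only [if_pos h]
    have hs : (0:ℝ) < Real.sqrt δ := Real.sqrt_pos.2 h
    have h1 : HasDerivAt (fun t => Real.sin (Real.sqrt δ * t) / Real.sqrt δ)
        (Real.cos (Real.sqrt δ * t) * (Real.sqrt δ * 1) / Real.sqrt δ) t :=
      (((hasDerivAt_id t).const_mul (Real.sqrt δ)).sin).div_const _
    convert h1 using 1
    field_simp
  · simp only [if_neg (by linarith : ¬ 0 < δ), if_pos h.symm]
    exact hasDerivAt_id' t
  · have h1 : ¬ 0 < δ := by linarith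
    have h2 : δ ≠ 0 := by linarith
    simp only [if_neg h1, if_neg h2]
    have hs : (0:ℝ) < Real.sqrt (-δ) := Real.sqrt_pos.2 (by linarith)
    have hd : HasDerivAt (fun t => Real.sinh (Real.sqrt (-δ) * t) / Real.sqrt (-δ))
        (Real.cosh (Real.sqrt (-δ) * t) * (Real.sqrt (-δ) * 1) / Real.sqrt (-δ)) t :=
      (((hasDerivAt_id t).const_mul (Real.sqrt (-δ))).sinh).div_const _
    convert hd using 1
    field_simp

lemma hasDerivAt_cdel (δ t : ℝ) : HasDerivAt (cdel δ) (-δ * sdel δ t) t := by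
  unfold sdel cdel
  rcases lt_trichotomy 0 δ with h | h | h
  · simp only [if_pos h]
    have hs : (0:ℝ) < Real.sqrt δ := Real.sqrt_pos.2 h
    have h1 : HasDerivAt (fun t => Real.cos (Real.sqrt δ * t))
        (-Real.sin (Real.sqrt δ * t) * (Real.sqrt δ * 1)) t :=
      ((hasDerivAt_id t).const_mul (Real.sqrt δ)).cos
    convert h1 using 1
    have hh : Real.sqrt δ * Real.sqrt δ = δ := Real.mul_self_sqrt h.le
    field_simp
    ring_nf
    rw [Real.sq_sqrt h.le]
  · simp only [if_neg (by linarith : ¬ 0 < δ), if_pos h.symm]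
    rw [← h]
    simpa using hasDerivAt_const t (1:ℝ)
  · have h1 : ¬ 0 < δ := by linarith
    have h2 : δ ≠ 0 := by linarith
    simp only [if_neg h1, if_neg h2]
    have hs : (0:ℝ) < Real.sqrt (-δ) := Real.sqrt_pos.2 (by linarith)
    have hd : HasDerivAt (fun t => Real.cosh (Real.sqrt (-δ) * t))
        (Real.sinh (Real.sqrt (-δ) * t) * (Real.sqrt (-δ) * 1)) t :=
      ((hasDerivAt_id t).const_mul (Real.sqrt (-δ))).cosh
    convert hd using 1
    have hh : Real.sqrt (-δ) * Real.sqrt (-δ) = -δ := Real.mul_self_sqrt (by linarith)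
    have hδ : δ = -(Real.sqrt (-δ) * Real.sqrt (-δ)) := by linarith
    rw [hδ]
    field_simp
    rw [Real.sqrt_sq hs.le]

/-- The model solution `u'' = -δ u`, `u 0 = 1`, `u' 0 = a`. -/
noncomputable def ufun (δ a t : ℝ) : ℝ := cdel δ t + a * sdel δ t

/-- Its derivative. -/
noncomputable def ufun' (δ a t : ℝ) : ℝ := a * cdel δ t - δ * sdel δ t

lemma ufun_zero (δ a : ℝ) : ufun δ a 0 = 1 := by simp [ufun, sdel_zero, cdel_zero]

lemma ufun'_zero (δ a : ℝ) : ufun' δ a 0 = a := by simp [ufun', sdel_zero, cdel_zero]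

lemma hasDerivAt_ufun (δ a t : ℝ) : HasDerivAt (ufun δ a) (ufun' δ a t) t := by
  have h := (hasDerivAt_cdel δ t).add ((hasDerivAt_sdel δ t).const_mul a)
  convert h using 1 <;> try rfl
  simp [ufun']; ring

lemma hasDerivAt_ufun' (δ a t : ℝ) : HasDerivAt (ufun' δ a) (-δ * ufun δ a t) t := by
  have h := ((hasDerivAt_cdel δ t).const_mul a).sub ((hasDerivAt_sdel δ t).const_mul δ)
  convert h using 1 <;> try rfl
  simp [ufun]; ring

lemma continuous_ufun (δ a : ℝ) : Continuous (ufun δ a) :=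
  continuous_iff_continuousAt.2 fun t => (hasDerivAt_ufun δ a t).continuousAt

/-- Core Sturm-type comparison: if `w` is a positive supersolution of `w'' = -δ w`
with the same initial data, then `u ≤ w` on `[0,T]` as long as `u ≥ 0` there. -/
lemma lemA (δ a T : ℝ) (hT : 0 ≤ T) (w w' w'' : ℝ → ℝ)
    (hw : ∀ x ∈ Set.Icc 0 T, HasDerivAt w (w' x) x)
    (hw' : ∀ x ∈ Set.Icc 0 T, HasDerivAt w' (w'' x) x)
    (hwpos : ∀ x ∈ Set.Icc 0 T, 0 < w x)
    (hw0 : w 0 = 1) (hw'0 : w' 0 = a)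
    (hsuper : ∀ x ∈ Set.Icc 0 T, -δ * w x ≤ w'' x)
    (hu : ∀ x ∈ Set.Icc 0 T, 0 ≤ ufun δ a x) :
    ufun δ a T ≤ w T := by
  have h0T : (0:ℝ) ∈ Set.Icc 0 T := ⟨le_refl _, hT⟩
  have hTT : T ∈ Set.Icc 0 T := ⟨hT, le_refl _⟩
  set W : ℝ → ℝ := fun x => ufun' δ a x * w x - ufun δ a x * w' x with hW
  have hWderiv : ∀ x ∈ Set.Icc 0 T,
      HasDerivAt W (-δ * ufun δ a x * w x - ufun δ a x * w'' x) x := by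
    intro x hx
    have h := ((hasDerivAt_ufun' δ a x).mul (hw x hx)).sub
      ((hasDerivAt_ufun δ a x).mul (hw' x hx))
    convert h using 1 <;> try rfl
    ring
  -- W is antitone on [0,T]
  have hWanti : AntitoneOn W (Set.Icc 0 T) := by
    apply antitoneOn_of_deriv_nonpos (convex_Icc 0 T)
    · exact fun x hx => (hWderiv x hx).continuousAt.continuousWithinAt
    · intro x hx
      rw [interior_Icc] at hx
      exact ((hWderiv x (Set.mem_Icc_of_Ioo hx)).differentiableAt).differentiableWithinAt
    · intro x hx
      rw [interior_Icc] at hx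
      have hx' : x ∈ Set.Icc 0 T := Set.mem_Icc_of_Ioo hx
      rw [(hWderiv x hx').deriv]
      have h1 := hsuper x hx'
      have h2 := hu x hx'
      nlinarith
  have hW0 : W 0 = 0 := by simp [hW, ufun_zero, ufun'_zero, hw0, hw'0]
  have hWle : ∀ x ∈ Set.Icc 0 T, W x ≤ 0 := by
    intro x hx
    have := hWanti h0T hx hx.1
    rwa [hW0] at this
  -- the quotient u / w is antitone on [0,T]
  set g : ℝ → ℝ := fun x => ufun δ a x / w x with hg
  have hgderiv : ∀ x ∈ Set.Icc 0 T, HasDerivAt g (W x / (w x)^2) x := by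
    intro x hx
    have h := (hasDerivAt_ufun δ a x).div (hw x hx) (ne_of_gt (hwpos x hx))
    convert h using 1 <;> try rfl
  have hganti : AntitoneOn g (Set.Icc 0 T) := by
    apply antitoneOn_of_deriv_nonpos (convex_Icc 0 T)
    · exact fun x hx => (hgderiv x hx).continuousAt.continuousWithinAt
    · intro x hx
      rw [interior_Icc] at hx
      exact ((hgderiv x (Set.mem_Icc_of_Ioo hx)).differentiableAt).differentiableWithinAt
    · intro x hx
      rw [interior_Icc] at hx
      have hx' : x ∈ Set.Icc 0 T := Set.mem_Icc_of_Ioo hx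
      rw [(hgderiv x hx').deriv]
      exact div_nonpos_of_nonpos_of_nonneg (hWle x hx') (sq_nonneg _)
  have hg0 : g 0 = 1 := by simp [hg, ufun_zero, hw0]
  have := hganti h0T hTT hT
  rw [hg0] at this
  have hwT := hwpos T hTT
  calc ufun δ a T = g T * w T := by simp only [hg]; field_simp
    _ ≤ 1 * w T := by nlinarith
    _ = w T := one_mul _

/-- Exponential bound: `u_m ≤ exp((Ht - ρt²/2)/m)` on `[0,t]` where `u_m ≥ 0`. -/
lemma lemB (H ρ m t : ℝ) (hm : 0 < m) (ht : 0 ≤ t)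
    (hu : ∀ x ∈ Set.Icc 0 t, 0 ≤ ufun (ρ/m) (H/m) x) :
    ufun (ρ/m) (H/m) t ≤ Real.exp ((H*t - ρ/2*t^2)/m) := by
  set p : ℝ → ℝ := fun s => (H*s - ρ/2*s^2)/m with hp
  have hpd : ∀ s : ℝ, HasDerivAt p ((H - ρ*s)/m) s := by
    intro s
    have h := (((hasDerivAt_id s).const_mul H).sub
      ((hasDerivAt_pow 2 s).const_mul (ρ/2))).div_const m
    convert h using 1 <;> try rfl
    push_cast
    ring
  set w : ℝ → ℝ := fun s => Real.exp (p s) with hwdef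
  set w' : ℝ → ℝ := fun s => (H - ρ*s)/m * Real.exp (p s) with hw'def
  set w'' : ℝ → ℝ := fun s => (((H - ρ*s)/m)^2 - ρ/m) * Real.exp (p s) with hw''def
  have hwd : ∀ s : ℝ, HasDerivAt w (w' s) s := by
    intro s
    have h := (hpd s).exp
    convert h using 1 <;> try rfl
    simp [hw'def]
    ring
  have hw'd : ∀ s : ℝ, HasDerivAt w' (w'' s) s := by
    intro s
    have h1 : HasDerivAt (fun s : ℝ => (H - ρ*s)/m) (-ρ/m) s := by
      have h := (((hasDerivAt_id s).const_mul ρ).const_sub H).div_const m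
      convert h using 1 <;> try rfl
      ring
    have h := h1.mul (hwd s)
    convert h using 1 <;> try rfl
    simp only [hw'def, hw''def]
    ring
  apply lemA (ρ/m) (H/m) t ht w w' w''
    (fun x _ => hwd x) (fun x _ => hw'd x) (fun x _ => Real.exp_pos _)
  · simp [hwdef, hp]
  · simp [hw'def, hp]
  · intro x _
    simp only [hw''def]
    have := Real.exp_pos (p x)
    nlinarith [sq_nonneg ((H - ρ*x)/m)]
  · exact hu

/-- Power comparison: `u_{m₁} ≤ u_{m₂}^{m₂/m₁}` on `[0,t]` whenever `u_{m₁} ≥ 0` and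
`u_{m₂} > 0` there. -/
lemma lemC (H ρ m₁ m₂ t : ℝ) (hm₁ : 0 < m₁) (h12 : m₁ ≤ m₂) (ht : 0 ≤ t)
    (hu₁ : ∀ x ∈ Set.Icc 0 t, 0 ≤ ufun (ρ/m₁) (H/m₁) x)
    (hu₂ : ∀ x ∈ Set.Icc 0 t, 0 < ufun (ρ/m₂) (H/m₂) x) :
    ufun (ρ/m₁) (H/m₁) t ≤ (ufun (ρ/m₂) (H/m₂) t) ^ (m₂/m₁) := by
  have hm₂ : 0 < m₂ := lt_of_lt_of_le hm₁ h12
  set r : ℝ := m₂/m₁ with hr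
  have hr1 : 1 ≤ r := (one_le_div hm₁).2 h12
  set δ₂ : ℝ := ρ/m₂ with hδ₂
  set a₂ : ℝ := H/m₂ with ha₂
  set u : ℝ → ℝ := ufun δ₂ a₂ with hudef
  set u' : ℝ → ℝ := ufun' δ₂ a₂ with hu'def
  set w : ℝ → ℝ := fun x => u x ^ r with hwdef
  set w' : ℝ → ℝ := fun x => u' x * r * u x ^ (r - 1) with hw'def
  set w'' : ℝ → ℝ := fun x =>
    (-δ₂ * u x) * r * u x ^ (r - 1) + (u' x * r) * (u' x * (r - 1) * u x ^ (r - 1 - 1))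
    with hw''def
  have hwd : ∀ x ∈ Set.Icc 0 t, HasDerivAt w (w' x) x := by
    intro x _
    exact (hasDerivAt_ufun δ₂ a₂ x).rpow_const (Or.inr hr1)
  have hw'd : ∀ x ∈ Set.Icc 0 t, HasDerivAt w' (w'' x) x := by
    intro x hx
    have hne : u x ≠ 0 := ne_of_gt (hu₂ x hx)
    have h := ((hasDerivAt_ufun' δ₂ a₂ x).mul_const r).mul
      ((hasDerivAt_ufun δ₂ a₂ x).rpow_const (p := r - 1) (Or.inl hne))
    convert h using 1 <;> try rfl
  apply lemA (ρ/m₁) (H/m₁) t ht w w' w''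
  · exact hwd
  · exact hw'd
  · intro x hx
    exact Real.rpow_pos_of_pos (hu₂ x hx) r
  · simp [hwdef, hudef, ufun_zero, Real.one_rpow]
  · simp only [hw'def, hu'def, hudef, ufun_zero, ufun'_zero, Real.one_rpow]
    rw [ha₂, hr]
    field_simp
  · intro x hx
    have hpos := hu₂ x hx
    have hne : u x ≠ 0 := ne_of_gt hpos
    have e1 : u x ^ (r - 1) = u x ^ r / u x := Real.rpow_sub_one hne r
    have key : (-δ₂ * u x) * r * u x ^ (r - 1) = -(ρ/m₁) * u x ^ r := by
      rw [e1, hδ₂, hr]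
      field_simp
    have h2 : 0 ≤ (u' x * r) * (u' x * (r - 1) * u x ^ (r - 1 - 1)) := by
      have hB : 0 < u x ^ (r - 1 - 1) := Real.rpow_pos_of_pos hpos _
      have : (u' x * r) * (u' x * (r - 1) * u x ^ (r - 1 - 1))
          = r * (r - 1) * (u' x)^2 * u x ^ (r - 1 - 1) := by ring
      rw [this]
      have hr0 : (0:ℝ) ≤ r := le_trans zero_le_one hr1
      have hr1' : (0:ℝ) ≤ r - 1 := by linarith
      positivity
    simp only [hw''def, hwdef]
    nlinarith [key, h2]
  · exact hu₁

/-- Positivity propagation: if `u_{m₁} > 0` on `[0,t]` then `u_{m₂} > 0` on `[0,t]`. -/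
lemma lemD (H ρ m₁ m₂ t : ℝ) (hm₁ : 0 < m₁) (h12 : m₁ ≤ m₂) (ht : 0 ≤ t)
    (hu₁ : ∀ x ∈ Set.Icc 0 t, 0 < ufun (ρ/m₁) (H/m₁) x) :
    ∀ x ∈ Set.Icc 0 t, 0 < ufun (ρ/m₂) (H/m₂) x := by
  have hm₂ : 0 < m₂ := lt_of_lt_of_le hm₁ h12
  set r : ℝ := m₂/m₁ with hr
  have hr1 : 1 ≤ r := (one_le_div hm₁).2 h12
  set u₂ : ℝ → ℝ := ufun (ρ/m₂) (H/m₂) with hu₂def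
  have hcont : Continuous u₂ := continuous_ufun _ _
  by_contra hcon
  push_neg at hcon
  obtain ⟨x₀, hx₀, hx₀le⟩ := hcon
  set K : Set ℝ := Set.Icc 0 t ∩ u₂ ⁻¹' Set.Iic 0 with hK
  have hKne : K.Nonempty := ⟨x₀, hx₀, hx₀le⟩
  have hKcomp : IsCompact K := isCompact_Icc.inter_right (isClosed_Iic.preimage hcont)
  obtain ⟨T₀, hT₀K, hT₀least⟩ := hKcomp.exists_isLeast hKne
  have hT₀Icc : T₀ ∈ Set.Icc 0 t := hT₀K.1
  have hT₀le : u₂ T₀ ≤ 0 := hT₀K.2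
  have hT₀pos : 0 < T₀ := by
    rcases hT₀Icc.1.lt_or_eq with h | h
    · exact h
    · exfalso
      rw [← h] at hT₀le
      rw [hu₂def, ufun_zero] at hT₀le
      linarith
  have hpos_lt : ∀ s, 0 ≤ s → s < T₀ → 0 < u₂ s := by
    intro s hs0 hsT
    by_contra hneg
    push_neg at hneg
    have : s ∈ K := ⟨⟨hs0, le_trans hsT.le hT₀Icc.2⟩, hneg⟩
    exact absurd (hT₀least this) (not_le.2 hsT)
  -- on [0, T₀), u₁ ≤ u₂ ^ r
  have hineq : ∀ s ∈ Set.Ico (0:ℝ) T₀, ufun (ρ/m₁) (H/m₁) s ≤ u₂ s ^ r := by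
    intro s hs
    apply lemC H ρ m₁ m₂ s hm₁ h12 hs.1
    · intro x hx
      exact (hu₁ x ⟨hx.1, le_trans hx.2 (le_trans hs.2.le hT₀Icc.2)⟩).le
    · intro x hx
      exact hpos_lt x hx.1 (lt_of_le_of_lt hx.2 hs.2)
  -- pass to the limit s → T₀⁻
  have hclos : T₀ ∈ closure (Set.Ico (0:ℝ) T₀) := by
    rw [closure_Ico (ne_of_lt hT₀pos)]
    exact ⟨hT₀pos.le, le_refl _⟩
  have hNeBot : (nhdsWithin T₀ (Set.Ico (0:ℝ) T₀)).NeBot :=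
    mem_closure_iff_nhdsWithin_neBot.1 hclos
  -- u₂ T₀ = 0
  have hT₀0 : u₂ T₀ = 0 := by
    have htend : Filter.Tendsto u₂ (nhdsWithin T₀ (Set.Ico (0:ℝ) T₀)) (nhds (u₂ T₀)) :=
      (hcont.continuousAt).continuousWithinAt
    have hge : 0 ≤ u₂ T₀ := by
      apply ge_of_tendsto htend
      filter_upwards [self_mem_nhdsWithin] with s hs
      exact (hpos_lt s hs.1 hs.2).le
    linarith
  have htend₁ : Filter.Tendsto (ufun (ρ/m₁) (H/m₁)) (nhdsWithin T₀ (Set.Ico (0:ℝ) T₀))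
      (nhds (ufun (ρ/m₁) (H/m₁) T₀)) :=
    ((continuous_ufun _ _).continuousAt).continuousWithinAt
  have htend₂ : Filter.Tendsto (fun s => u₂ s ^ r) (nhdsWithin T₀ (Set.Ico (0:ℝ) T₀))
      (nhds 0) := by
    have h1 : ContinuousAt (fun y : ℝ => y ^ r) (u₂ T₀) := by
      rw [hT₀0]
      exact Real.continuousAt_rpow_const 0 r (Or.inr (by linarith))
    have h2 : Filter.Tendsto (fun s => u₂ s ^ r) (nhdsWithin T₀ (Set.Ico (0:ℝ) T₀))
        (nhds (u₂ T₀ ^ r)) :=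
      (h1.comp (hcont.continuousAt)).continuousWithinAt.tendsto
    rwa [hT₀0, Real.zero_rpow (by positivity : r ≠ 0)] at h2
  have hle : ufun (ρ/m₁) (H/m₁) T₀ ≤ 0 := by
    apply le_of_tendsto_of_tendsto htend₁ htend₂
    filter_upwards [self_mem_nhdsWithin] with s hs
    exact hineq s hs
  exact absurd (hu₁ T₀ hT₀Icc) (not_lt.2 hle)

lemma Jfun_eq (H ρ m t : ℝ) : Jfun H ρ m t =
    (if ∃ s ∈ Set.Ioo (min t 0) (max t 0), ufun (ρ/m) (H/m) s = 0 then 0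
     else ufun (ρ/m) (H/m) t) ^ m := rfl

/-- If there is no root in `(0,t)`, then `u ≥ 0` on `[0,t]`. -/
lemma noroot_nonneg (δ a t : ℝ) (ht : 0 ≤ t)
    (hnr : ¬∃ s ∈ Set.Ioo (0:ℝ) t, ufun δ a s = 0) :
    ∀ x ∈ Set.Icc 0 t, 0 ≤ ufun δ a x := by
  intro x hx
  by_contra h
  push_neg at h
  have hc : ContinuousOn (ufun δ a) (Set.Icc 0 x) := (continuous_ufun δ a).continuousOn
  have h0 : (0:ℝ) ∈ Set.Ioo (ufun δ a x) (ufun δ a 0) := by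
    rw [ufun_zero]; exact ⟨h, one_pos⟩
  obtain ⟨s, hs, hs0⟩ := intermediate_value_Ioo' hx.1 hc h0
  exact hnr ⟨s, ⟨hs.1, lt_of_lt_of_le hs.2 hx.2⟩, hs0⟩

lemma main_nonneg (H ρ m₁ m₂ t : ℝ) (hm₁ : 0 < m₁) (h12 : m₁ ≤ m₂) (ht : 0 ≤ t) :
    Jfun H ρ m₁ t ≤ Jfun H ρ m₂ t ∧ Jfun H ρ m₂ t ≤ Real.exp (H * t - ρ / 2 * t ^ 2) := by
  have hm₂ : 0 < m₂ := lt_of_lt_of_le hm₁ h12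
  have hmin : min t 0 = 0 := min_eq_right ht
  have hmax : max t 0 = t := max_eq_left ht
  set u₁ : ℝ → ℝ := ufun (ρ/m₁) (H/m₁) with hu₁def
  set u₂ : ℝ → ℝ := ufun (ρ/m₂) (H/m₂) with hu₂def
  rw [Jfun_eq, Jfun_eq, hmin, hmax]
  -- part 2 and nonnegativity of the middle term
  have key2 : (if ∃ s ∈ Set.Ioo (0:ℝ) t, u₂ s = 0 then (0:ℝ) else u₂ t) ^ m₂ ≤
      Real.exp (H * t - ρ / 2 * t ^ 2) ∧
      0 ≤ (if ∃ s ∈ Set.Ioo (0:ℝ) t, u₂ s = 0 then (0:ℝ) else u₂ t) ^ m₂ := by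
    by_cases hC₂ : ∃ s ∈ Set.Ioo (0:ℝ) t, u₂ s = 0
    · rw [if_pos hC₂, Real.zero_rpow (ne_of_gt hm₂)]
      exact ⟨(Real.exp_pos _).le, le_refl _⟩
    · rw [if_neg hC₂]
      have hnn := noroot_nonneg (ρ/m₂) (H/m₂) t ht hC₂
      have hB := lemB H ρ m₂ t hm₂ ht hnn
      constructor
      · calc u₂ t ^ m₂ ≤ (Real.exp ((H*t - ρ/2*t^2)/m₂)) ^ m₂ :=
              Real.rpow_le_rpow (hnn t ⟨ht, le_refl _⟩) hB hm₂.le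
          _ = Real.exp (H * t - ρ / 2 * t ^ 2) := by
              rw [← Real.exp_mul]
              congr 1
              field_simp
      · exact Real.rpow_nonneg (hnn t ⟨ht, le_refl _⟩) _
  refine ⟨?_, key2.1⟩
  -- part 1
  by_cases hC₁ : ∃ s ∈ Set.Ioo (0:ℝ) t, u₁ s = 0
  · rw [if_pos hC₁, Real.zero_rpow (ne_of_gt hm₁)]
    exact key2.2
  · rw [if_neg hC₁]
    have hnn₁ := noroot_nonneg (ρ/m₁) (H/m₁) t ht hC₁
    rcases (hnn₁ t ⟨ht, le_refl _⟩).lt_or_eq with hu₁t | hu₁t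
    · -- u₁ t > 0 : strict positivity everywhere on [0,t]
      have hpos₁ : ∀ x ∈ Set.Icc 0 t, 0 < u₁ x := by
        intro x hx
        rcases (hnn₁ x hx).lt_or_eq with h | h
        · exact h
        · exfalso
          rcases hx.1.lt_or_eq with h0 | h0
          · rcases hx.2.lt_or_eq with h1 | h1
            · exact hC₁ ⟨x, ⟨h0, h1⟩, h.symm⟩
            · exact (ne_of_gt hu₁t) (h1 ▸ h).symm
          · subst h0
            rw [ufun_zero] at h
            exact one_ne_zero h.symm
      have hpos₂ := lemD H ρ m₁ m₂ t hm₁ h12 ht hpos₁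
      have hC₂false : ¬∃ s ∈ Set.Ioo (0:ℝ) t, u₂ s = 0 := by
        rintro ⟨s, hs, hs0⟩
        exact (hpos₂ s ⟨hs.1.le, hs.2.le⟩).ne' hs0
      rw [if_neg hC₂false]
      have hcomp := lemC H ρ m₁ m₂ t hm₁ h12 ht hnn₁ hpos₂
      calc u₁ t ^ m₁ ≤ (u₂ t ^ (m₂/m₁)) ^ m₁ :=
            Real.rpow_le_rpow hu₁t.le hcomp hm₁.le
        _ = u₂ t ^ m₂ := by
            rw [← Real.rpow_mul (hpos₂ t ⟨ht, le_refl _⟩).le]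
            congr 1
            field_simp
    · rw [← hu₁t, Real.zero_rpow (ne_of_gt hm₁)]
      exact key2.2

lemma Jfun_neg_arg (H ρ m t : ℝ) : Jfun H ρ m (-t) = Jfun (-H) ρ m t := by
  rw [Jfun_eq, Jfun_eq]
  have hval : ∀ s : ℝ, ufun (ρ/m) (H/m) (-s) = ufun (ρ/m) ((-H)/m) s := by
    intro s
    simp only [ufun, sdel_neg, cdel_neg, neg_div]
    ring
  have e1 : min t 0 = -(max (-t) 0) := by rw [← min_neg_neg, neg_neg, neg_zero]
  have e2 : max t 0 = -(min (-t) 0) := by rw [← max_neg_neg, neg_neg, neg_zero]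
  have hval2 : ∀ s : ℝ, ufun (ρ/m) ((-H)/m) (-s) = ufun (ρ/m) (H/m) s := by
    intro s
    simp only [ufun, sdel_neg, cdel_neg, neg_div]
    ring
  have hiff : (∃ s ∈ Set.Ioo (min (-t) 0) (max (-t) 0), ufun (ρ/m) (H/m) s = 0) ↔
      (∃ s ∈ Set.Ioo (min t 0) (max t 0), ufun (ρ/m) ((-H)/m) s = 0) := by
    constructor
    · rintro ⟨s, ⟨h1, h2⟩, h0⟩
      refine ⟨-s, ⟨by rw [e1]; linarith, by rw [e2]; linarith⟩, ?_⟩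
      rw [hval2 s]
      exact h0
    · rintro ⟨s, ⟨h1, h2⟩, h0⟩
      refine ⟨-s, ⟨by rw [e1] at h1; linarith, by rw [e2] at h2; linarith⟩, ?_⟩
      rw [hval s]
      exact h0
  rw [hval t, if_congr hiff rfl rfl]

/-- `m ↦ J_{H,ρ,m}` is pointwise nondecreasing in `m ∈ (0,∞]`, where
`J_{H,ρ,∞}(t) = exp(Ht − (ρ/2)t²)`. -/
theorem stmt2 (H ρ m₁ m₂ : ℝ) (hm₁ : 0 < m₁) (h12 : m₁ ≤ m₂) (t : ℝ) :
    Jfun H ρ m₁ t ≤ Jfun H ρ m₂ t ∧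
    Jfun H ρ m₂ t ≤ Real.exp (H * t - ρ / 2 * t ^ 2) := by
  rcases le_total 0 t with ht | ht
  · exact main_nonneg H ρ m₁ m₂ t hm₁ h12 ht
  · have h := main_nonneg (-H) ρ m₁ m₂ (-t) hm₁ h12 (by linarith)
    have e1 : Jfun H ρ m₁ t = Jfun (-H) ρ m₁ (-t) := by
      rw [← Jfun_neg_arg H ρ m₁ (-t), neg_neg]
    have e2 : Jfun H ρ m₂ t = Jfun (-H) ρ m₂ (-t) := by
      rw [← Jfun_neg_arg H ρ m₂ (-t), neg_neg]
    have e3 : -H * (-t) - ρ / 2 * (-t) ^ 2 = H * t - ρ / 2 * t ^ 2 := by ring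
    rw [e3] at h
    rw [e1, e2]
    exact h
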